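/- For every ψ : Finset α → ℂ with ψ(∅) = 0, every x ∈ α, and every finite ω ⊆ α with x ∉ ω, one has [D_{x}(exp* ψ)](ω) = [(exp* ψ) * (D_{x}ψ)](ω). -/

import Mathlib

open Finset

noncomputable section

variable {α : Type*} [DecidableEq α]

/-- The convolution `(ψ₁ * ψ₂)(ω) := Σ_{ω₁ ⊆ ω} ψ₁(ω₁)·ψ₂(ω \ ω₁)`. -/
def starMul (ψ₁ ψ₂ : Finset α → ℂ) : Finset α → ℂ :=
  fun ω => ∑ ω₁ ∈ ω.powerset, ψ₁ ω₁ * ψ₂ (ω \ ω₁)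

/-- The unit `1*` of the convolution algebra. -/
def starUnit : Finset α → ℂ := fun ω => if ω = ∅ then 1 else 0

/-- Convolution powers `ψ^{*n}`. -/
def starPow (ψ : Finset α → ℂ) : ℕ → Finset α → ℂ
  | 0 => starUnit
  | n + 1 => starMul ψ (starPow ψ n)

/-- `exp* ψ := Σ_{n≥0} ψ^{*n}/n!`; for `ψ(∅) = 0` this is a pointwise finite sum since
`ψ^{*n}(ω) = 0` whenever `n > |ω|`. -/
def expStar (ψ : Finset α → ℂ) : Finset α → ℂ :=
  fun ω => ∑ n ∈ Finset.range (ω.card + 1), (n.factorial : ℂ)⁻¹ * starPow ψ n ω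

/-- `(D_{ω'}ψ)(ω) := ψ(ω ∪ ω')` if `ω ∩ ω' = ∅` and `0` otherwise. -/
def Dop (ω' : Finset α) (ψ : Finset α → ℂ) : Finset α → ℂ :=
  fun ω => if Disjoint ω ω' then ψ (ω ∪ ω') else 0

lemma starMul_comm (ψ₁ ψ₂ : Finset α → ℂ) (ω : Finset α) :
    starMul ψ₁ ψ₂ ω = starMul ψ₂ ψ₁ ω := by
  unfold starMul
  refine Finset.sum_nbij' (fun σ => ω \ σ) (fun σ => ω \ σ) ?_ ?_ ?_ ?_ ?_ <;>
    intro σ hσ <;> simp only [mem_powerset] at *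
  · exact sdiff_subset
  · exact sdiff_subset
  · exact Finset.sdiff_sdiff_eq_self hσ
  · exact Finset.sdiff_sdiff_eq_self hσ
  · rw [Finset.sdiff_sdiff_eq_self hσ, mul_comm]

lemma starMul_left_comm (ψ₁ ψ₂ ψ₃ : Finset α → ℂ) (ω : Finset α) :
    starMul ψ₁ (starMul ψ₂ ψ₃) ω = starMul ψ₂ (starMul ψ₁ ψ₃) ω := by
  unfold starMul
  simp only [Finset.mul_sum]
  rw [Finset.sum_comm' (s' := fun τ => (ω \ τ).powerset) (t' := ω.powerset)]
  · refine Finset.sum_congr rfl fun τ _ => Finset.sum_congr rfl fun σ _ => ?_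
    rw [sdiff_sdiff_comm]; ring
  · intro σ τ
    simp only [mem_powerset, subset_sdiff]
    constructor
    · rintro ⟨h1, h2, h3⟩; exact ⟨⟨h1, h3.symm⟩, h2⟩
    · rintro ⟨⟨h1, h2⟩, h3⟩; exact ⟨h1, h3, h2.symm⟩

lemma starPow_eq_zero (ψ : Finset α → ℂ) (hψ : ψ ∅ = 0) :
    ∀ n (ω : Finset α), ω.card < n → starPow ψ n ω = 0 := by
  intro n
  induction n with
  | zero => intro ω h; omega
  | succ n ih =>
    intro ω h
    show ∑ σ ∈ ω.powerset, ψ σ * starPow ψ n (ω \ σ) = 0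
    refine Finset.sum_eq_zero fun σ hσ => ?_
    rw [mem_powerset] at hσ
    rcases eq_or_ne σ ∅ with rfl | hne
    · rw [hψ, zero_mul]
    · rw [ih (ω \ σ) ?_, mul_zero]
      have h1 : (ω \ σ).card < ω.card := by
        apply card_lt_card
        rw [Finset.ssubset_iff_of_subset sdiff_subset]
        obtain ⟨a, ha⟩ := Finset.nonempty_iff_ne_empty.2 hne
        exact ⟨a, hσ ha, by simp [ha]⟩
      omega

lemma Dop_starMul (ψ₁ ψ₂ : Finset α → ℂ) (x : α) (ω : Finset α) (hx : x ∉ ω) :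
    Dop {x} (starMul ψ₁ ψ₂) ω
      = starMul (Dop {x} ψ₁) ψ₂ ω + starMul ψ₁ (Dop {x} ψ₂) ω := by
  have hdisj : Disjoint ω ({x} : Finset α) := by simpa using hx
  simp only [Dop, starMul, if_pos hdisj]
  have hins : ω ∪ {x} = insert x ω := by rw [union_comm, insert_eq]
  rw [hins, Finset.sum_powerset_insert hx, add_comm]
  congr 1
  · refine Finset.sum_congr rfl fun σ hσ => ?_
    rw [mem_powerset] at hσ
    have hxσ : x ∉ σ := fun h => hx (hσ h)
    have hd : Disjoint σ ({x} : Finset α) := by simpa using hxσ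
    rw [if_pos hd, insert_sdiff_insert, sdiff_insert,
      erase_eq_of_notMem (by simp [hx]), union_comm, ← insert_eq]
  · refine Finset.sum_congr rfl fun σ hσ => ?_
    rw [mem_powerset] at hσ
    have hxσ : x ∉ σ := fun h => hx (hσ h)
    have hd : Disjoint (ω \ σ) ({x} : Finset α) := by simp [hx]
    rw [if_pos hd, insert_sdiff_of_notMem _ hxσ, union_comm, ← insert_eq]

lemma Dop_starPow (ψ : Finset α → ℂ) (hψ : ψ ∅ = 0) (x : α) :
    ∀ n (ω : Finset α), x ∉ ω →
      Dop {x} (starPow ψ (n + 1)) ω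
        = ((n : ℂ) + 1) * starMul (Dop {x} ψ) (starPow ψ n) ω := by
  intro n
  induction n with
  | zero =>
    intro ω hx
    show Dop {x} (starMul ψ starUnit) ω = _
    rw [Dop_starMul _ _ _ _ hx]
    have h1 : starMul ψ (Dop {x} starUnit) ω = 0 := by
      refine Finset.sum_eq_zero fun σ hσ => ?_
      rw [mem_powerset] at hσ
      have hd : Disjoint (ω \ σ) ({x} : Finset α) := by simp [hx]
      simp only [Dop, if_pos hd, starUnit]
      rw [if_neg (by simp [Finset.union_eq_empty]), mul_zero]
    rw [h1, add_zero]
    norm_num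
    rfl
  | succ n ih =>
    intro ω hx
    show Dop {x} (starMul ψ (starPow ψ (n + 1))) ω = _
    rw [Dop_starMul _ _ _ _ hx]
    have h2 : starMul ψ (Dop {x} (starPow ψ (n + 1))) ω
        = ((n : ℂ) + 1) * starMul ψ (starMul (Dop {x} ψ) (starPow ψ n)) ω := by
      show (∑ σ ∈ ω.powerset, ψ σ * Dop {x} (starPow ψ (n + 1)) (ω \ σ))
        = ((n : ℂ) + 1) * ∑ σ ∈ ω.powerset, ψ σ * starMul (Dop {x} ψ) (starPow ψ n) (ω \ σ)
      rw [Finset.mul_sum]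
      refine Finset.sum_congr rfl fun σ hσ => ?_
      rw [mem_powerset] at hσ
      have hxσ : x ∉ ω \ σ := fun h => hx (mem_sdiff.1 h).1
      rw [ih (ω \ σ) hxσ]; ring
    rw [h2, starMul_left_comm]
    have h3 : starMul ψ (starPow ψ n) = starPow ψ (n + 1) := rfl
    rw [h3]
    push_cast
    ring

/-- For every `ψ` with `ψ(∅) = 0`, every `x ∈ α` and every finite `ω` with `x ∉ ω`,
`[D_x(exp* ψ)](ω) = [(exp* ψ) * (D_x ψ)](ω)`. -/
theorem Dop_expStar (ψ : Finset α → ℂ) (hψ : ψ ∅ = 0) (x : α) (ω : Finset α) (hx : x ∉ ω) :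
    Dop {x} (expStar ψ) ω = starMul (expStar ψ) (Dop {x} ψ) ω := by
  have hdisj : Disjoint ω ({x} : Finset α) := by simpa using hx
  have hins : ω ∪ {x} = insert x ω := by rw [union_comm, insert_eq]
  have hcard : (insert x ω).card = ω.card + 1 := card_insert_of_notMem hx
  have hL : Dop {x} (expStar ψ) ω
      = ∑ m ∈ Finset.range (ω.card + 1),
          (m.factorial : ℂ)⁻¹ * starMul (Dop {x} ψ) (starPow ψ m) ω := by
    show (if Disjoint ω ({x} : Finset α) then expStar ψ (ω ∪ {x}) else 0) = _
    rw [if_pos hdisj, hins]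
    unfold expStar
    rw [hcard, Finset.sum_range_succ']
    have h0 : ((Nat.factorial 0 : ℕ) : ℂ)⁻¹ * starPow ψ 0 (insert x ω) = 0 := by
      have : starPow ψ 0 (insert x ω) = 0 := by
        simp [starPow, starUnit, insert_ne_empty]
      rw [this, mul_zero]
    rw [h0, add_zero]
    refine Finset.sum_congr rfl fun m hm => ?_
    have h1 : starPow ψ (m + 1) (insert x ω) = Dop {x} (starPow ψ (m + 1)) ω := by
      show _ = if Disjoint ω ({x} : Finset α) then starPow ψ (m+1) (ω ∪ {x}) else 0
      rw [if_pos hdisj, hins]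
    rw [h1, Dop_starPow ψ hψ x m ω hx, Nat.factorial_succ]
    have hm0 : ((m : ℂ) + 1) ≠ 0 := by exact_mod_cast Nat.succ_ne_zero m
    have hf0 : ((m.factorial : ℂ)) ≠ 0 := by
      exact_mod_cast Nat.cast_ne_zero.2 (Nat.factorial_ne_zero m)
    push_cast
    field_simp
  rw [hL, starMul_comm]
  unfold starMul
  simp only [Finset.mul_sum]
  rw [Finset.sum_comm]
  refine Finset.sum_congr rfl fun σ hσ => ?_
  rw [mem_powerset] at hσ
  have hsub : (ω \ σ).card + 1 ≤ ω.card + 1 := by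
    have := card_le_card (sdiff_subset (s := ω) (t := σ)); omega
  have hext : expStar ψ (ω \ σ) = ∑ m ∈ Finset.range (ω.card + 1),
      (m.factorial : ℂ)⁻¹ * starPow ψ m (ω \ σ) := by
    unfold expStar
    refine Finset.sum_subset (by simp [hsub] ) fun m _ hm => ?_
    rw [mem_range, not_lt] at hm
    rw [starPow_eq_zero ψ hψ m (ω \ σ) (by omega), mul_zero]
  rw [hext, Finset.mul_sum]
  refine Finset.sum_congr rfl fun m _ => ?_
  ring


end
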